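/- arXiv:1702.03446 — 3 statements merged into one kernel-verified Lean document; each statement's English description precedes it below -/
import Mathlib

section
/- Contraction property of patch averaging: let P_{s_i} ∈ ℝ^{n×n}, i = 1,…,N, be orthogonal projection matrices, and let M_A = (1/n)Σ_{i=1}^{N} R_iᵀP_{s_i}R_i, where R_i are the cyclic patch extraction operators and n divides N. Then the operator norm ‖M_A‖₂ ≤ 1. -/
open Matrix

noncomputable section

/-- Cyclic patch-extraction operator: extracts the `n` consecutive coordinates of a signal of
length `N` starting at position `i`, indices taken modulo `N`. -/
def Rop (N n : ℕ) (i : Fin N) : Matrix (Fin n) (Fin N) ℝ :=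
  Matrix.of fun k j => if (j : ℕ) = ((i : ℕ) + (k : ℕ)) % N then 1 else 0

/-- Global convolutional dictionary: horizontal concatenation of the blocks `(1/n) • Rᵢᵀ D`. -/
def DG (N n m : ℕ) (D : Matrix (Fin n) (Fin m) ℝ) : Matrix (Fin N) (Fin N × Fin m) ℝ :=
  Matrix.of fun x p => ((1 / (n : ℝ)) • ((Rop N n p.1)ᵀ * D)) x p.2

/-- `Qᵢ` places `D` in block position `i` and zeros elsewhere. -/
def Qop (N n m : ℕ) (D : Matrix (Fin n) (Fin m) ℝ) (i : Fin N) :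
    Matrix (Fin n) (Fin N × Fin m) ℝ :=
  Matrix.of fun k p => if p.1 = i then D k p.2 else 0

/-- Patch-agreement constraint matrix `M`: block rows `Qᵢ - Rᵢ D_G`. -/
def Mop (N n m : ℕ) (D : Matrix (Fin n) (Fin m) ℝ) :
    Matrix (Fin N × Fin n) (Fin N × Fin m) ℝ :=
  Matrix.of fun q p => (Qop N n m D q.1 - Rop N n q.1 * DG N n m D) q.2 p

/-- Bottom extraction operator `S_B = [0  I_{n-1}]`. -/
def SBop (n : ℕ) : Matrix (Fin (n - 1)) (Fin n) ℝ :=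
  Matrix.of fun r j => if (j : ℕ) = (r : ℕ) + 1 then 1 else 0

/-- Top extraction operator `S_T = [I_{n-1}  0]`. -/
def STop (n : ℕ) : Matrix (Fin (n - 1)) (Fin n) ℝ :=
  Matrix.of fun r j => if (j : ℕ) = (r : ℕ) then 1 else 0

/-- `ℓ₀` pseudo-norm: the number of nonzero entries. -/
def l0 {m : ℕ} (α : Fin m → ℝ) : ℕ := (Function.support α).ncard

/-- The support of a vector, as a `Finset`. -/
def suppF {m : ℕ} (α : Fin m → ℝ) : Finset (Fin m) :=
  (Set.toFinite (Function.support α)).toFinset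

/-- The spark of a dictionary: the minimal number of linearly dependent columns (`⊤` if the
columns are linearly independent). -/
def spark {n m : ℕ} (D : Matrix (Fin n) (Fin m) ℝ) : ℕ∞ :=
  sInf {j : ℕ∞ | ∃ s : Finset (Fin m), (s.card : ℕ∞) = j ∧
    (D.submatrix id (fun a : {a // a ∈ s} => (a : Fin m))).rank < s.card}

/-- The globalized spark relative to a family `T` of allowed supports. -/
def gspark {n m : ℕ} (D : Matrix (Fin n) (Fin m) ℝ) (T : Set (Finset (Fin m))) : ℕ∞ :=
  sInf {j : ℕ∞ | ∃ s₁ ∈ T, ∃ s₂ ∈ T, (((s₁ ∪ s₂).card : ℕ) : ℕ∞) = j ∧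
    (D.submatrix id (fun a : {a // a ∈ s₁ ∪ s₂} => (a : Fin m))).rank < (s₁ ∪ s₂).card}
/-- embed a plain vector into EuclideanSpace -/
abbrev env {k : ℕ} (v : Fin k → ℝ) : EuclideanSpace ℝ (Fin k) := (WithLp.equiv 2 (Fin k → ℝ)).symm v

lemma dot_le {k : ℕ} (v w : Fin k → ℝ) : v ⬝ᵥ w ≤ ‖env v‖ * ‖env w‖ := by
  have := real_inner_le_norm (env v) (env w)
  simpa [PiLp.inner_apply, RCLike.inner_apply, dotProduct, mul_comm] using this

lemma dot_self {k : ℕ} (v : Fin k → ℝ) : v ⬝ᵥ v = ‖env v‖ * ‖env v‖ := by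
  have := real_inner_self_eq_norm_mul_norm (env v)
  rw [← this]; rfl

lemma proj_contract {k : ℕ} (Q : Matrix (Fin k) (Fin k) ℝ) (hs : Qᵀ = Q) (hi : Q * Q = Q)
    (v : Fin k → ℝ) : ‖env (Q *ᵥ v)‖ ≤ ‖env v‖ := by
  have h1 : (Q *ᵥ v) ⬝ᵥ (Q *ᵥ v) = (Q *ᵥ v) ⬝ᵥ v := by
    rw [dotProduct_mulVec]
    congr 1
    calc (Q *ᵥ v) ᵥ* Q = (Q *ᵥ v) ᵥ* Qᵀᵀ := by rw [transpose_transpose]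
    _ = Qᵀ *ᵥ (Q *ᵥ v) := vecMul_transpose _ _
    _ = Q *ᵥ (Q *ᵥ v) := by rw [hs]
    _ = (Q * Q) *ᵥ v := mulVec_mulVec _ _ _
    _ = Q *ᵥ v := by rw [hi]
  have h2 : ‖env (Q *ᵥ v)‖ * ‖env (Q *ᵥ v)‖ ≤ ‖env (Q *ᵥ v)‖ * ‖env v‖ := by
    rw [← dot_self]; rw [h1]; exact dot_le _ _
  rcases eq_or_lt_of_le (norm_nonneg (env (Q *ᵥ v))) with h | h
  · rw [← h]; exact norm_nonneg _
  · exact le_of_mul_le_mul_left h2 h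

lemma Rop_mulVec {N n : ℕ} (hN : 0 < N) (i : Fin N) (x : Fin N → ℝ) (k : Fin n) :
    (Rop N n i *ᵥ x) k = x ⟨((i : ℕ) + (k : ℕ)) % N, Nat.mod_lt _ hN⟩ := by
  have h : ∀ j : Fin N, ((j : ℕ) = ((i : ℕ) + (k : ℕ)) % N) ↔
      j = ⟨((i : ℕ) + (k : ℕ)) % N, Nat.mod_lt _ hN⟩ := fun j => by
    constructor <;> intro hj <;> [exact Fin.ext hj; exact congrArg Fin.val hj]
  simp only [Rop, Matrix.mulVec, dotProduct, Matrix.of_apply, h, ite_mul, one_mul, zero_mul,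
    Finset.sum_ite_eq', Finset.mem_univ, if_true]

lemma sum_sq_patches {N n : ℕ} (hN : 0 < N) (x : Fin N → ℝ) :
    ∑ i : Fin N, (Rop N n i *ᵥ x) ⬝ᵥ (Rop N n i *ᵥ x) = (n : ℝ) * (x ⬝ᵥ x) := by
  simp only [dotProduct, Rop_mulVec hN]
  rw [Finset.sum_comm]
  have key : ∀ k : Fin n, ∑ i : Fin N,
      x ⟨((i : ℕ) + (k : ℕ)) % N, Nat.mod_lt _ hN⟩ * x ⟨((i : ℕ) + (k : ℕ)) % N, Nat.mod_lt _ hN⟩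
      = ∑ j : Fin N, x j * x j := by
    intro k
    haveI : NeZero N := ⟨hN.ne'⟩
    set c : Fin N := ⟨(k : ℕ) % N, Nat.mod_lt _ hN⟩ with hc
    have hb : ∀ i : Fin N, (⟨((i : ℕ) + (k : ℕ)) % N, Nat.mod_lt _ hN⟩ : Fin N) = i + c := by
      intro i
      apply Fin.ext
      simp only [Fin.add_def, hc]
      conv_lhs => rw [Nat.add_mod]
      conv_rhs => rw [Nat.add_mod]
      simp [Nat.mod_mod]
    simp only [hb]
    exact Fintype.sum_equiv (Equiv.addRight c) _ _ (fun i => rfl)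
  rw [Finset.sum_congr rfl (fun k _ => key k)]
  simp [Finset.sum_const, mul_comm]

lemma dot_sum {k : ℕ} {ι : Type*} (s : Finset ι) (v : Fin k → ℝ) (f : ι → Fin k → ℝ) :
    v ⬝ᵥ (∑ i ∈ s, f i) = ∑ i ∈ s, v ⬝ᵥ f i := by
  simp only [dotProduct, Finset.sum_apply, Finset.mul_sum]
  rw [Finset.sum_comm]

lemma pair_bound {n N : ℕ} (hN : 0 < N) (P : Fin N → Matrix (Fin n) (Fin n) ℝ)
    (hPsym : ∀ i, (P i)ᵀ = P i) (hPidem : ∀ i, P i * P i = P i) (x y : Fin N → ℝ) :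
    y ⬝ᵥ ((∑ i, (Rop N n i)ᵀ * P i * Rop N n i) *ᵥ x) ≤ (n : ℝ) * (‖env x‖ * ‖env y‖) := by
  have hsum : (∑ i, (Rop N n i)ᵀ * P i * Rop N n i) *ᵥ x
      = ∑ i, ((Rop N n i)ᵀ * P i * Rop N n i) *ᵥ x := by
    induction (Finset.univ : Finset (Fin N)) using Finset.induction with
    | empty => simp [Matrix.zero_mulVec]
    | insert h ih => simp_all [Matrix.add_mulVec]
  rw [hsum, dot_sum]
  -- rewrite each term
  have hterm : ∀ i, y ⬝ᵥ (((Rop N n i)ᵀ * P i * Rop N n i) *ᵥ x)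
      = (P i *ᵥ (Rop N n i *ᵥ y)) ⬝ᵥ (P i *ᵥ (Rop N n i *ᵥ x)) := by
    intro i
    have h1 : ((Rop N n i)ᵀ * P i * Rop N n i) *ᵥ x
        = (Rop N n i)ᵀ *ᵥ (P i *ᵥ (Rop N n i *ᵥ x)) := by
      rw [mulVec_mulVec, mulVec_mulVec, Matrix.mul_assoc]
    rw [h1, dotProduct_mulVec, vecMul_transpose]
    have h2 : P i *ᵥ (Rop N n i *ᵥ x) = (P i)ᵀ *ᵥ (P i *ᵥ (Rop N n i *ᵥ x)) := by
      rw [mulVec_mulVec (Rop N n i *ᵥ x) ((P i)ᵀ) (P i), hPsym, hPidem]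
    conv_lhs => rw [h2]
    rw [dotProduct_mulVec, vecMul_transpose]
  simp only [hterm]
  have hle : ∀ i, (P i *ᵥ (Rop N n i *ᵥ y)) ⬝ᵥ (P i *ᵥ (Rop N n i *ᵥ x))
      ≤ ‖env (Rop N n i *ᵥ y)‖ * ‖env (Rop N n i *ᵥ x)‖ := by
    intro i
    refine le_trans (dot_le _ _) ?_
    exact mul_le_mul (proj_contract _ (hPsym i) (hPidem i) _)
      (proj_contract _ (hPsym i) (hPidem i) _) (norm_nonneg _) (norm_nonneg _)
  refine le_trans (Finset.sum_le_sum fun i _ => hle i) ?_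
  -- Cauchy–Schwarz over i
  have hcs := Finset.sum_mul_sq_le_sq_mul_sq Finset.univ
    (fun i => ‖env (Rop N n i *ᵥ y)‖) (fun i => ‖env (Rop N n i *ᵥ x)‖)
  have hy2 : ∑ i : Fin N, ‖env (Rop N n i *ᵥ y)‖ ^ 2 = (n : ℝ) * ‖env y‖ ^ 2 := by
    simp only [sq]
    simp only [← dot_self]
    exact sum_sq_patches hN y
  have hx2 : ∑ i : Fin N, ‖env (Rop N n i *ᵥ x)‖ ^ 2 = (n : ℝ) * ‖env x‖ ^ 2 := by
    simp only [sq]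
    simp only [← dot_self]
    exact sum_sq_patches hN x
  rw [hy2, hx2] at hcs
  have hnn : (0:ℝ) ≤ ∑ i : Fin N, ‖env (Rop N n i *ᵥ y)‖ * ‖env (Rop N n i *ᵥ x)‖ :=
    Finset.sum_nonneg fun i _ => mul_nonneg (norm_nonneg _) (norm_nonneg _)
  have h2 : (∑ i : Fin N, ‖env (Rop N n i *ᵥ y)‖ * ‖env (Rop N n i *ᵥ x)‖) ^ 2
      ≤ ((n : ℝ) * (‖env x‖ * ‖env y‖)) ^ 2 := by
    refine le_trans hcs (le_of_eq ?_)
    ring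
  have hrhs : (0:ℝ) ≤ (n : ℝ) * (‖env x‖ * ‖env y‖) :=
    mul_nonneg (Nat.cast_nonneg n) (mul_nonneg (norm_nonneg _) (norm_nonneg _))
  exact (pow_le_pow_iff_left₀ hnn hrhs two_ne_zero).mp h2

/-- Contraction property of patch averaging: `‖M_A‖₂ ≤ 1`. -/
theorem MA_contraction (n N : ℕ) (hn : 0 < n) (hdvd : n ∣ N)
    (P : Fin N → Matrix (Fin n) (Fin n) ℝ)
    (hPsym : ∀ i, (P i)ᵀ = P i) (hPidem : ∀ i, P i * P i = P i) :
    ‖Matrix.toEuclideanCLM (𝕜 := ℝ)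
      ((1 / (n : ℝ)) • ∑ i, (Rop N n i)ᵀ * P i * Rop N n i)‖ ≤ 1 := by
  set M : Matrix (Fin N) (Fin N) ℝ := ∑ i, (Rop N n i)ᵀ * P i * Rop N n i with hM
  set T := Matrix.toEuclideanCLM (𝕜 := ℝ) ((1 / (n : ℝ)) • M) with hT
  refine ContinuousLinearMap.opNorm_le_bound _ zero_le_one (fun v => ?_)
  rw [one_mul]
  rcases Nat.eq_zero_or_pos N with hN0 | hN
  · subst hN0
    have hv : T v = 0 := Subsingleton.elim _ _
    rw [hv, norm_zero]; exact norm_nonneg _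
  · set t := T v with ht
    have ht' : (WithLp.equiv 2 (Fin N → ℝ)) t = ((1 / (n : ℝ)) • M) *ᵥ (WithLp.equiv 2 _ v) :=
      Matrix.ofLp_toEuclideanCLM _ _
    set t' : Fin N → ℝ := (WithLp.equiv 2 (Fin N → ℝ)) t with ht'def
    set v' : Fin N → ℝ := (WithLp.equiv 2 (Fin N → ℝ)) v with hv'def
    have henvt : env t' = t := (WithLp.equiv 2 (Fin N → ℝ)).symm_apply_apply t
    have henvv : env v' = v := (WithLp.equiv 2 (Fin N → ℝ)).symm_apply_apply v
    have hkey : ‖t‖ * ‖t‖ ≤ ‖v‖ * ‖t‖ := by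
      have h1 : ‖t‖ * ‖t‖ = t' ⬝ᵥ t' := by rw [← henvt, dot_self]
      have h2 : t' ⬝ᵥ t' = (1 / (n : ℝ)) * (t' ⬝ᵥ (M *ᵥ v')) := by
        have e1 : t' ⬝ᵥ t' = t' ⬝ᵥ (((1 / (n : ℝ)) • M) *ᵥ v') := by rw [← ht']
        rw [e1, Matrix.smul_mulVec, dotProduct_smul, smul_eq_mul]
      have h3 : t' ⬝ᵥ (M *ᵥ v') ≤ (n : ℝ) * (‖env v'‖ * ‖env t'‖) :=
        pair_bound hN P hPsym hPidem v' t'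
      have hpos : (0:ℝ) < 1 / (n : ℝ) := by positivity
      calc ‖t‖ * ‖t‖ = (1 / (n : ℝ)) * (t' ⬝ᵥ (M *ᵥ v')) := by rw [h1, h2]
        _ ≤ (1 / (n : ℝ)) * ((n : ℝ) * (‖env v'‖ * ‖env t'‖)) := by
            exact mul_le_mul_of_nonneg_left h3 hpos.le
        _ = ‖env v'‖ * ‖env t'‖ := by
            field_simp
        _ = ‖v‖ * ‖t‖ := by rw [henvt, henvv]
    rcases eq_or_lt_of_le (norm_nonneg t) with h | h
    · rw [← h]; exact norm_nonneg _
    · exact le_of_mul_le_mul_right hkey h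

end
end

section
/- Injectivity and dimension identity: let 𝒮 = (s_1,…,s_P) be a support sequence such that each D_{s_i} has full column rank, let D_G^{(𝒮)} be the global dictionary restricted to the columns in 𝒮, let M_*^{(𝒮)} be the restriction of the overlap-constraint matrix M_* to those columns, and let A_𝒮 be the stacked matrix with block rows (I_n − P_{s_i})R_i, where P_{s_i} is the orthogonal projection onto the column space of D_{s_i}. Then dim ker A_𝒮 = dim ker M_*^{(𝒮)}. -/
open Matrix

noncomputable section

open Fin.NatCast

lemma sum_ite_fin {N : ℕ} {c : ℕ} {t : Fin N} (ht : (t : ℕ) = c) (v : Fin N → ℝ) :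
    (∑ j : Fin N, if (j : ℕ) = c then v j else 0) = v t := by
  rw [Finset.sum_eq_single_of_mem t (Finset.mem_univ t)]
  · simp [ht]
  · intro b _ hb
    have hbc : ¬((b : ℕ) = c) := fun h => hb (Fin.ext (by rw [h, ← ht]))
    simp [hbc]

lemma Rop_mulVec_s12 {N n : ℕ} [NeZero N] (i : Fin N) (v : Fin N → ℝ) (k : Fin n) :
    (Rop N n i).mulVec v k = v (i + ((k : ℕ) : Fin N)) := by
  have hval : ((i + ((k : ℕ) : Fin N)) : Fin N).val = ((i : ℕ) + (k : ℕ)) % N := by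
    rw [Fin.val_add, Fin.val_natCast]
    conv_rhs => rw [Nat.add_mod]
    rw [Nat.mod_eq_of_lt i.isLt]
  simp only [Rop, Matrix.mulVec, dotProduct, Matrix.of_apply, ite_mul, one_mul, zero_mul]
  exact sum_ite_fin hval v

lemma SB_mul {n m : ℕ} (D : Matrix (Fin n) (Fin m) ℝ) (r : Fin (n-1)) (a : Fin m) :
    (SBop n * D) r a = D ⟨(r:ℕ)+1, by have := r.isLt; omega⟩ a := by
  rw [Matrix.mul_apply]
  simp only [SBop, Matrix.of_apply, ite_mul, one_mul, zero_mul]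
  exact sum_ite_fin (t := ⟨(r:ℕ)+1, by have := r.isLt; omega⟩) rfl (fun j => D j a)

lemma ST_mul {n m : ℕ} (D : Matrix (Fin n) (Fin m) ℝ) (r : Fin (n-1)) (a : Fin m) :
    (STop n * D) r a = D ⟨(r:ℕ), by have := r.isLt; omega⟩ a := by
  rw [Matrix.mul_apply]
  simp only [STop, Matrix.of_apply, ite_mul, one_mul, zero_mul]
  exact sum_ite_fin (t := ⟨(r:ℕ), by have := r.isLt; omega⟩) rfl (fun j => D j a)

def patD {n m N : ℕ} (D : Matrix (Fin n) (Fin m) ℝ) (s : Fin N → Finset (Fin m))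
    (Γ : ((i : Fin N) × {a // a ∈ s i}) → ℝ) (i : Fin N) (k : Fin n) : ℝ :=
  ∑ a : {a // a ∈ s i}, Γ ⟨i, a⟩ * D k (a : Fin m)

def phiL (n m N : ℕ) (hn : 0 < n) (D : Matrix (Fin n) (Fin m) ℝ) (s : Fin N → Finset (Fin m)) :
    (((i : Fin N) × {a // a ∈ s i}) → ℝ) →ₗ[ℝ] (Fin N → ℝ) where
  toFun Γ := fun j => patD D s Γ j ⟨0, hn⟩
  map_add' Γ₁ Γ₂ := by funext j; simp [patD, add_mul, Finset.sum_add_distrib]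
  map_smul' c Γ := by funext j; simp [patD, Finset.mul_sum, mul_assoc]

lemma fin_ne_add_one {N : ℕ} [NeZero N] (hN : 1 < N) (i : Fin N) : i ≠ i + 1 := by
  intro h
  have h0 : (0 : Fin N) = 1 := by
    have h' : i + 0 = i + 1 := by simpa using h
    exact add_left_cancel h'
  have h1 : ((0 : Fin N) : ℕ) = ((1 : Fin N) : ℕ) := congrArg Fin.val h0
  rw [show (1 : Fin N) = ((1 : ℕ) : Fin N) by simp] at h1
  rw [Fin.val_natCast, Nat.mod_eq_of_lt hN] at h1
  simp at h1

lemma MS_apply {n m N : ℕ} [NeZero N] (hN : 1 < N) (D : Matrix (Fin n) (Fin m) ℝ)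
    (s : Fin N → Finset (Fin m)) (Γ : ((i : Fin N) × {a // a ∈ s i}) → ℝ)
    (i : Fin N) (r : Fin (n-1)) :
    (Matrix.of (fun q p =>
      if p.1 = q.1 then (SBop n * D) q.2 (p.2 : Fin m)
      else if p.1 = q.1 + 1 then -((STop n * D) q.2 (p.2 : Fin m)) else 0) :
      Matrix (Fin N × Fin (n-1)) ((i : Fin N) × {a // a ∈ s i}) ℝ).mulVec Γ (i, r)
    = patD D s Γ i ⟨(r:ℕ)+1, by have := r.isLt; omega⟩
      - patD D s Γ (i+1) ⟨(r:ℕ), by have := r.isLt; omega⟩ := by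
  have hne : i ≠ i + 1 := fin_ne_add_one hN i
  have hstep : (Matrix.of (fun q p =>
      if p.1 = q.1 then (SBop n * D) q.2 (p.2 : Fin m)
      else if p.1 = q.1 + 1 then -((STop n * D) q.2 (p.2 : Fin m)) else 0) :
      Matrix (Fin N × Fin (n-1)) ((i : Fin N) × {a // a ∈ s i}) ℝ).mulVec Γ (i, r)
      = ∑ j : Fin N, ∑ a : {a // a ∈ s j},
        (if j = i then (SBop n * D) r (a : Fin m)
         else if j = i + 1 then -((STop n * D) r (a : Fin m)) else 0) * Γ ⟨j, a⟩ := by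
    simp only [Matrix.mulVec, dotProduct, Matrix.of_apply]
    rw [← Finset.univ_sigma_univ, Finset.sum_sigma]
  rw [hstep]
  have hterm : ∀ j : Fin N, (∑ a : {a // a ∈ s j},
      (if j = i then (SBop n * D) r (a : Fin m)
       else if j = i + 1 then -((STop n * D) r (a : Fin m)) else 0) * Γ ⟨j, a⟩)
      = (if j = i then ∑ a : {a // a ∈ s i}, (SBop n * D) r (a : Fin m) * Γ ⟨i, a⟩ else 0)
        + (if j = i + 1 then
            ∑ a : {a // a ∈ s (i+1)}, -((STop n * D) r (a : Fin m) * Γ ⟨i+1, a⟩) else 0) := by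
    intro j
    rcases eq_or_ne j i with h | h
    · subst h
      simp only [eq_self_iff_true, if_true, if_neg hne, add_zero]
    · rcases eq_or_ne j (i+1) with h2 | h2
      · subst h2
        simp only [if_neg h, eq_self_iff_true, if_true, neg_mul, zero_add]
      · simp only [if_neg h, if_neg h2, zero_mul, Finset.sum_const_zero, add_zero]
  rw [Finset.sum_congr rfl (fun j _ => hterm j)]
  rw [Finset.sum_add_distrib]
  simp only [Finset.sum_ite_eq', Finset.mem_univ, if_true]
  rw [Finset.sum_neg_distrib]
  rw [sub_eq_add_neg]
  congr 1
  · apply Finset.sum_congr rfl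
    intro a _
    rw [SB_mul, mul_comm]
  · congr 1
    apply Finset.sum_congr rfl
    intro a _
    rw [ST_mul, mul_comm]


/-- Injectivity and dimension identity: `dim ker A_𝒮 = dim ker M_*^(𝒮)` when each `D_{sᵢ}`
has full column rank and `P_{sᵢ}` is the orthogonal projection onto its column span. -/
theorem dim_ker_AS_eq (n m N : ℕ) [NeZero N] (hn : 0 < n) (hnN : n ≤ N)
    (D : Matrix (Fin n) (Fin m) ℝ) (s : Fin N → Finset (Fin m))
    (hfull : ∀ i, LinearIndependent ℝ
      (fun a : {a // a ∈ s i} => fun r : Fin n => D r (a : Fin m)))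
    (P : Fin N → Matrix (Fin n) (Fin n) ℝ)
    (hPsym : ∀ i, (P i)ᵀ = P i) (hPidem : ∀ i, P i * P i = P i)
    (hPrange : ∀ i, LinearMap.range (P i).mulVecLin =
      Submodule.span ℝ (Set.range fun a : {a // a ∈ s i} => fun r : Fin n => D r (a : Fin m)))
    (AS : Matrix (Fin N × Fin n) (Fin N) ℝ)
    (hAS : AS = Matrix.of fun q j => (((1 - P q.1) * Rop N n q.1 : Matrix (Fin n) (Fin N) ℝ) q.2 j))
    (MS : Matrix (Fin N × Fin (n - 1)) ((i : Fin N) × {a // a ∈ s i}) ℝ)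
    (hMS : MS = Matrix.of fun q p =>
      if p.1 = q.1 then (SBop n * D) q.2 (p.2 : Fin m)
      else if p.1 = q.1 + 1 then -((STop n * D) q.2 (p.2 : Fin m)) else 0) :
    Module.finrank ℝ (LinearMap.ker AS.mulVecLin) =
      Module.finrank ℝ (LinearMap.ker MS.mulVecLin) := by
  classical
  -- patD as a sum of scaled columns
  have hcol : ∀ (i : Fin N) (Γ : ((i : Fin N) × {a // a ∈ s i}) → ℝ),
      patD D s Γ i = ∑ a : {a // a ∈ s i}, Γ ⟨i, a⟩ • (fun r : Fin n => D r (a : Fin m)) := by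
    intro i Γ
    funext k
    simp [patD, Finset.sum_apply]
  -- P i fixes vectors in the span
  have hfix : ∀ (i : Fin N) (v : Fin n → ℝ),
      v ∈ Submodule.span ℝ (Set.range fun a : {a // a ∈ s i} => fun r : Fin n => D r (a : Fin m)) →
      (P i).mulVec v = v := by
    intro i v hv
    rw [← hPrange i] at hv
    obtain ⟨y, hy⟩ := hv
    rw [← hy]
    show (P i).mulVec ((P i).mulVec y) = (P i).mulVecLin y
    rw [Matrix.mulVec_mulVec, hPidem]
    rfl
  -- AS applied componentwise
  have hASapp : ∀ (x : Fin N → ℝ) (i : Fin N) (k : Fin n),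
      AS.mulVec x (i, k) = (1 - P i).mulVec ((Rop N n i).mulVec x) k := by
    intro x i k
    rw [Matrix.mulVec_mulVec, hAS]
    rfl
  have hASker : ∀ x : Fin N → ℝ, AS.mulVec x = 0 ↔
      ∀ i : Fin N, (1 - P i).mulVec ((Rop N n i).mulVec x) = 0 := by
    intro x
    constructor
    · intro h i
      funext k
      rw [← hASapp, h]
      rfl
    · intro h
      funext q
      obtain ⟨i, k⟩ := q
      rw [hASapp, h i]
      rfl
  -- shift relation from MS Γ = 0
  have hshift : ∀ (Γ) (_ : MS.mulVec Γ = 0) (i : Fin N) (k : ℕ) (hk : k + 1 < n),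
      patD D s Γ i ⟨k+1, hk⟩ = patD D s Γ (i+1) ⟨k, by omega⟩ := by
    intro Γ hΓ i k hk
    have hN : 1 < N := lt_of_lt_of_le (by omega) hnN
    have h0 := congrFun hΓ (i, (⟨k, by omega⟩ : Fin (n-1)))
    rw [hMS, MS_apply hN] at h0
    simp only [Pi.zero_apply] at h0
    exact sub_eq_zero.mp h0
  -- propagation
  have hprop : ∀ (Γ) (_ : MS.mulVec Γ = 0) (i : Fin N) (k : ℕ) (hk : k < n),
      patD D s Γ i ⟨k, hk⟩ = patD D s Γ (i + (k : Fin N)) ⟨0, hn⟩ := by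
    intro Γ hΓ i k
    induction k generalizing i with
    | zero => intro hk; simp
    | succ k ih =>
      intro hk
      rw [hshift Γ hΓ i k hk, ih (i+1) (by omega)]
      congr 1
      push_cast
      abel
  -- R_i of phi Γ
  have hRphi : ∀ (Γ) (_ : MS.mulVec Γ = 0) (i : Fin N),
      (Rop N n i).mulVec (phiL n m N hn D s Γ) = patD D s Γ i := by
    intro Γ hΓ i
    funext k
    rw [Rop_mulVec_s12]
    show patD D s Γ (i + ((k : ℕ) : Fin N)) ⟨0, hn⟩ = patD D s Γ i k
    exact (hprop Γ hΓ i (k : ℕ) k.isLt).symm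
  -- forward
  have hforward : ∀ Γ, MS.mulVec Γ = 0 → AS.mulVec (phiL n m N hn D s Γ) = 0 := by
    intro Γ hΓ
    rw [hASker]
    intro i
    rw [hRphi Γ hΓ i]
    have hmem : patD D s Γ i ∈ Submodule.span ℝ
        (Set.range fun a : {a // a ∈ s i} => fun r : Fin n => D r (a : Fin m)) := by
      rw [hcol]
      exact Submodule.sum_mem _ fun a _ => Submodule.smul_mem _ _ (Submodule.subset_span ⟨a, rfl⟩)
    rw [Matrix.sub_mulVec, Matrix.one_mulVec, hfix i _ hmem, sub_self]
  -- injectivity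
  have hinj : ∀ Γ, MS.mulVec Γ = 0 → phiL n m N hn D s Γ = 0 → Γ = 0 := by
    intro Γ hΓ hphi
    funext p
    obtain ⟨i, a⟩ := p
    have h1 : patD D s Γ i = 0 := by
      rw [← hRphi Γ hΓ i, hphi, Matrix.mulVec_zero]
    have h2 : ∑ a : {a // a ∈ s i}, Γ ⟨i, a⟩ • (fun r : Fin n => D r (a : Fin m)) = 0 := by
      rw [← hcol]; exact h1
    exact (Fintype.linearIndependent_iff.mp (hfull i)) (fun a => Γ ⟨i, a⟩) h2 a
  -- surjectivity
  have hsurj : ∀ x, AS.mulVec x = 0 → ∃ Γ, MS.mulVec Γ = 0 ∧ phiL n m N hn D s Γ = x := by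
    intro x hx
    rw [hASker] at hx
    have hmem : ∀ i : Fin N, (Rop N n i).mulVec x ∈ Submodule.span ℝ
        (Set.range fun a : {a // a ∈ s i} => fun r : Fin n => D r (a : Fin m)) := by
      intro i
      rw [← hPrange i]
      have h := hx i
      rw [Matrix.sub_mulVec, Matrix.one_mulVec, sub_eq_zero] at h
      exact ⟨(Rop N n i).mulVec x, h.symm⟩
    have hc : ∀ i : Fin N, ∃ c : {a // a ∈ s i} → ℝ,
        ∑ a, c a • (fun r : Fin n => D r (a : Fin m)) = (Rop N n i).mulVec x := by
      intro i
      exact (Submodule.mem_span_range_iff_exists_fun ℝ).mp (hmem i)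
    choose c hcc using hc
    have hpat : ∀ i, patD D s (fun p => c p.1 p.2) i = (Rop N n i).mulVec x := by
      intro i; rw [hcol]; exact hcc i
    refine ⟨fun p => c p.1 p.2, ?_, ?_⟩
    · funext q
      obtain ⟨i, r⟩ := q
      have hN : 1 < N := lt_of_lt_of_le (by have := r.isLt; omega) hnN
      rw [hMS, MS_apply hN, hpat i, hpat (i+1)]
      rw [Rop_mulVec_s12, Rop_mulVec_s12]
      have heq : (i + ((((⟨(r:ℕ)+1, by have := r.isLt; omega⟩ : Fin n) : ℕ)) : Fin N))
          = ((i+1) + ((((⟨(r:ℕ), by have := r.isLt; omega⟩ : Fin n) : ℕ)) : Fin N)) := by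
        show (i + (((r:ℕ)+1 : ℕ) : Fin N)) = ((i+1) + (((r:ℕ) : ℕ) : Fin N))
        push_cast
        abel
      rw [heq, sub_self]
      rfl
    · funext j
      show patD D s (fun p => c p.1 p.2) j ⟨0, hn⟩ = x j
      rw [hpat j, Rop_mulVec_s12]
      show x (j + (((0:ℕ)) : Fin N)) = x j
      norm_num
  -- assemble
  have hmap : ∀ Γ ∈ LinearMap.ker MS.mulVecLin,
      phiL n m N hn D s Γ ∈ LinearMap.ker AS.mulVecLin := by
    intro Γ hΓ
    rw [LinearMap.mem_ker, Matrix.mulVecLin_apply]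
    exact hforward Γ (by rwa [LinearMap.mem_ker, Matrix.mulVecLin_apply] at hΓ)
  let F := (phiL n m N hn D s).restrict hmap
  have hbij : Function.Bijective F := by
    constructor
    · intro a b hab
      have h1 : phiL n m N hn D s (a : _) = phiL n m N hn D s (b : _) := by
        simpa [F, LinearMap.restrict_apply] using congrArg Subtype.val hab
      have h2 : phiL n m N hn D s ((a : _) - (b : _)) = 0 := by
        rw [map_sub, h1, sub_self]
      have h3 : MS.mulVec ((a : _) - (b : _)) = 0 := by
        have := sub_mem a.2 b.2
        rwa [LinearMap.mem_ker, Matrix.mulVecLin_apply] at this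
      have h4 := hinj _ h3 h2
      exact Subtype.ext (by rwa [sub_eq_zero] at h4)
    · rintro ⟨x, hx⟩
      have hx' : AS.mulVec x = 0 := by
        rwa [LinearMap.mem_ker, Matrix.mulVecLin_apply] at hx
      obtain ⟨Γ, hΓ, hphi⟩ := hsurj x hx'
      refine ⟨⟨Γ, by rw [LinearMap.mem_ker, Matrix.mulVecLin_apply]; exact hΓ⟩, ?_⟩
      exact Subtype.ext (by simpa [F, LinearMap.restrict_apply] using hphi)
  exact (LinearEquiv.ofBijective F hbij).symm.finrank_eq

end
end

section
/- Equivalence of local and global characterizations of the patch-sparse model: let 𝓜 = { x ∈ ℝ^N : R_i x = D α_i with ‖α_i‖₀ ≤ s for all i = 1,…,P } (cyclic patches, P = N). Then 𝓜 = { x ∈ ℝ^N : x = D_GΓ, MΓ = 0, ‖Γ‖_{0,∞} ≤ s }, where D_G is the global convolutional dictionary with blocks (1/n)R_iᵀD, M is the block matrix with block rows Q_i − R_iD_G, and ‖Γ‖_{0,∞} = max_i ‖α_i‖₀. -/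
open Matrix

noncomputable section

private lemma sum_RtR (N n : ℕ) [NeZero N] :
    ∑ i : Fin N, (Rop N n i)ᵀ * (Rop N n i) = (n : ℝ) • (1 : Matrix (Fin N) (Fin N) ℝ) := by
  ext a b
  have key : ∀ k : Fin n, (∑ i : Fin N,
      (if (a : ℕ) = ((i : ℕ) + (k : ℕ)) % N then (1:ℝ) else 0) *
      (if (b : ℕ) = ((i : ℕ) + (k : ℕ)) % N then (1:ℝ) else 0)) =
      if a = b then 1 else 0 := by
    intro k
    have hN : 0 < N := Fin.pos a
    set c : Fin N := ⟨(k : ℕ) % N, Nat.mod_lt _ hN⟩ with hc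
    set f : Fin N → ℝ := fun j =>
      (if a = j then (1:ℝ) else 0) * (if b = j then (1:ℝ) else 0) with hf
    calc (∑ i : Fin N,
          (if (a : ℕ) = ((i : ℕ) + (k : ℕ)) % N then (1:ℝ) else 0) *
          (if (b : ℕ) = ((i : ℕ) + (k : ℕ)) % N then (1:ℝ) else 0))
        = ∑ i : Fin N, f ((Equiv.addRight c) i) := by
          apply Finset.sum_congr rfl
          intro i _
          have hv : (((Equiv.addRight c) i : Fin N) : ℕ) = ((i : ℕ) + (k : ℕ)) % N := by
            simp [Fin.add_def, c, Nat.add_mod]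
          simp only [hf, ← hv, Fin.ext_iff]
      _ = ∑ j : Fin N, f j := Equiv.sum_comp _ _
      _ = if a = b then 1 else 0 := by
          simp only [hf, ite_mul, one_mul, zero_mul]
          simp [Finset.sum_ite_eq, eq_comm]
  rw [Matrix.sum_apply]
  have e1 : ∀ i : Fin N, ((Rop N n i)ᵀ * Rop N n i) a b = ∑ k : Fin n,
      (if (a : ℕ) = ((i : ℕ) + (k : ℕ)) % N then (1:ℝ) else 0) *
      (if (b : ℕ) = ((i : ℕ) + (k : ℕ)) % N then (1:ℝ) else 0) := fun i => by
    simp [Matrix.mul_apply, Rop]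
  rw [Finset.sum_congr rfl fun i _ => e1 i, Finset.sum_comm,
    Finset.sum_congr rfl fun k _ => key k, Finset.sum_const]
  simp [Matrix.one_apply, mul_comm]

lemma Qop_mulVec (N n m : ℕ) (D : Matrix (Fin n) (Fin m) ℝ) (i : Fin N)
    (Γ : Fin N × Fin m → ℝ) :
    (Qop N n m D i).mulVec Γ = D.mulVec (fun a => Γ (i, a)) := by
  ext k
  simp [Qop, Matrix.mulVec, dotProduct, Fintype.sum_prod_type, ite_mul,
    Finset.sum_ite_eq, Finset.sum_ite_eq']

lemma DG_mulVec (N n m : ℕ) (D : Matrix (Fin n) (Fin m) ℝ) (Γ : Fin N × Fin m → ℝ) :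
    (DG N n m D).mulVec Γ =
      (1 / (n : ℝ)) • ∑ i : Fin N, (Rop N n i)ᵀ.mulVec (D.mulVec (fun a => Γ (i, a))) := by
  ext x
  simp only [DG, Matrix.mulVec, dotProduct, Matrix.of_apply, Matrix.smul_apply,
    Pi.smul_apply, Finset.sum_apply, smul_eq_mul, Fintype.sum_prod_type, Matrix.mul_apply,
    Matrix.transpose_apply, Finset.mul_sum, Finset.sum_mul]
  apply Finset.sum_congr rfl
  intro i _
  rw [Finset.sum_comm]
  apply Finset.sum_congr rfl
  intro p _
  apply Finset.sum_congr rfl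
  intro q _
  ring

lemma Mop_mulVec (N n m : ℕ) (D : Matrix (Fin n) (Fin m) ℝ) (Γ : Fin N × Fin m → ℝ)
    (i : Fin N) (k : Fin n) :
    (Mop N n m D).mulVec Γ (i, k) =
      D.mulVec (fun a => Γ (i, a)) k - (Rop N n i).mulVec ((DG N n m D).mulVec Γ) k := by
  have : (Mop N n m D).mulVec Γ (i, k) =
      ((Qop N n m D i - Rop N n i * DG N n m D).mulVec Γ) k := rfl
  rw [this, Matrix.sub_mulVec, ← Matrix.mulVec_mulVec, Qop_mulVec]
  rfl

private lemma sum_mulVec' {N : ℕ} (A : Fin N → Matrix (Fin N) (Fin N) ℝ) (x : Fin N → ℝ) :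
    (∑ i, A i).mulVec x = ∑ i, (A i).mulVec x := by
  ext j
  simp [Matrix.mulVec, dotProduct, Matrix.sum_apply, Finset.sum_mul]
  rw [Finset.sum_comm]

/-- Equivalence of the local and global characterizations of the patch-sparse model:
`𝓜 = {x : ∀ i, Rᵢ x = D αᵢ, ‖αᵢ‖₀ ≤ s} = {x : x = D_G Γ, MΓ = 0, ‖Γ‖₀,∞ ≤ s}`. -/
theorem local_global_equiv (n m N s : ℕ) [NeZero N] (hn : 0 < n) (hnN : n ≤ N)
    (D : Matrix (Fin n) (Fin m) ℝ) :
    {x : Fin N → ℝ | ∀ i : Fin N, ∃ α : Fin m → ℝ,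
        (Rop N n i).mulVec x = D.mulVec α ∧ l0 α ≤ s} =
      {x : Fin N → ℝ | ∃ Γ : Fin N × Fin m → ℝ, x = (DG N n m D).mulVec Γ ∧
        (Mop N n m D).mulVec Γ = 0 ∧ ∀ i : Fin N, l0 (fun a => Γ (i, a)) ≤ s} := by
  ext x
  simp only [Set.mem_setOf_eq]
  constructor
  · intro h
    choose α hα hs using h
    set Γ : Fin N × Fin m → ℝ := fun p => α p.1 p.2 with hΓ
    have hx : (DG N n m D).mulVec Γ = x := by
      rw [DG_mulVec]
      have e : ∀ i : Fin N, (Rop N n i)ᵀ.mulVec (D.mulVec (fun a => Γ (i, a))) =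
          ((Rop N n i)ᵀ * Rop N n i).mulVec x := by
        intro i
        rw [← Matrix.mulVec_mulVec]
        exact congrArg _ (hα i).symm
      rw [Finset.sum_congr rfl fun i _ => e i, ← sum_mulVec', sum_RtR N n]
      ext j
      have hn' : (n : ℝ) ≠ 0 := Nat.cast_ne_zero.mpr hn.ne'
      simp [Matrix.mulVec, dotProduct, Matrix.smul_apply, Matrix.one_apply, mul_ite,
        Finset.sum_ite_eq']
      field_simp
    refine ⟨Γ, hx.symm, ?_, fun i => hs i⟩
    funext q
    obtain ⟨i, k⟩ := q
    rw [Mop_mulVec, hx]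
    have := hα i
    simp [← this]
    rw [this, sub_eq_zero]
  · rintro ⟨Γ, hx, hM, hs⟩ i
    refine ⟨fun a => Γ (i, a), ?_, hs i⟩
    funext k
    have h0 := congrFun hM (i, k)
    rw [Mop_mulVec] at h0
    rw [hx]
    have := sub_eq_zero.mp h0
    simpa using this.symm
end
end
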